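/- arXiv:2405.16212 — 2 statements merged into one kernel-verified Lean document; each statement's English description precedes it below -/
import Mathlib

section
/- Let X be a pre-Hilbert module over a C*-algebra A and φ a positive linear functional on A. If n ≥ 2 and x₁,…,xₙ, z ∈ X satisfy φ(|z|²)=1, then: |∏_{i=1}^{n} φ(⟨x_i,z⟩)| ≤ (1/2)·( ∏_{i=1}^{n} √(φ(|x_i|²)) + |φ(⟨x₁,x₂⟩)·∏_{i=3}^{n} φ(⟨x_i,z⟩)| ). -/
open scoped ComplexOrder

/-- The `CStarModule` class of the older Mathlib (right `A`-action via `Aᵐᵒᵖ`), restated because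
Mathlib's `CStarModule` now uses a left action `[SMul A E]` with different axioms. -/
class CStarModuleRight (A E : Type*) [NonUnitalSemiring A] [StarRing A]
    [Module ℂ A] [AddCommGroup E] [Module ℂ E] [PartialOrder A] [SMul Aᵐᵒᵖ E] [Norm A] [Norm E]
    extends Inner A E where
  inner_add_right {x} {y} {z} : inner x (y + z) = inner x y + inner x z
  inner_self_nonneg {x} : 0 ≤ inner x x
  inner_self {x} : inner x x = 0 ↔ x = 0
  inner_op_smul_right {a : A} {x y : E} : inner x (MulOpposite.op a • y) = inner x y * a
  inner_smul_right_complex {z : ℂ} {x} {y} : inner x (z • y) = z • inner x y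
  star_inner x y : star (inner x y) = inner y x
  norm_eq_sqrt_norm_inner_self x : ‖x‖ = Real.sqrt ‖inner x x‖


section aux
variable {A : Type*} [NonUnitalCStarAlgebra A] [PartialOrder A] [StarOrderedRing A]

lemma phi_conj_nonneg (φ : A →ₗ[ℂ] ℂ) (hφ : ∀ b : A, 0 ≤ b → 0 ≤ φ b)
    {b : A} (hb : 0 ≤ b) : (starRingEnd ℂ) (φ b) = φ b := by
  have h := hφ b hb
  rw [Complex.le_def] at h
  exact Complex.conj_eq_iff_im.2 (by simpa using h.2.symm)

lemma phi_conj_sa (φ : A →ₗ[ℂ] ℂ) (hφ : ∀ b : A, 0 ≤ b → 0 ≤ φ b)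
    {b : A} (hb : IsSelfAdjoint b) : (starRingEnd ℂ) (φ b) = φ b := by
  have h1 := phi_conj_nonneg φ hφ (CFC.posPart_nonneg b)
  have h2 := phi_conj_nonneg φ hφ (CFC.negPart_nonneg b)
  have h3 : b = b⁺ - b⁻ := (CFC.posPart_sub_negPart b hb).symm
  rw [h3, map_sub, map_sub, h1, h2]

lemma phi_star (φ : A →ₗ[ℂ] ℂ) (hφ : ∀ b : A, 0 ≤ b → 0 ≤ φ b)
    (a : A) : φ (star a) = (starRingEnd ℂ) (φ a) := by
  have h1 : IsSelfAdjoint (a + star a) := by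
    rw [IsSelfAdjoint, star_add, star_star, add_comm]
  have h2 : IsSelfAdjoint (Complex.I • (star a - a)) := by
    rw [IsSelfAdjoint, star_smul, star_sub, star_star, Complex.star_def, Complex.conj_I,
      neg_smul, ← smul_neg, neg_sub]
  have hI : (2:ℂ)⁻¹ * Complex.I * Complex.I = -(2:ℂ)⁻¹ := by
    rw [mul_assoc, Complex.I_mul_I]; ring
  have key : star a = (2:ℂ)⁻¹ • (a + star a)
      - ((2:ℂ)⁻¹ * Complex.I) • (Complex.I • (star a - a)) := by
    rw [smul_smul, hI]; module
  have key2 : a = (2:ℂ)⁻¹ • (a + star a)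
      + ((2:ℂ)⁻¹ * Complex.I) • (Complex.I • (star a - a)) := by
    rw [smul_smul, hI]; module
  have hb := phi_conj_sa φ hφ h1
  have hc := phi_conj_sa φ hφ h2
  have e1 := congrArg φ key
  rw [map_sub, map_smul, map_smul, smul_eq_mul, smul_eq_mul] at e1
  have e2 := congrArg (starRingEnd ℂ) (congrArg φ key2)
  rw [map_add, map_smul, map_smul, smul_eq_mul, smul_eq_mul, map_add, map_mul, map_mul,
    map_mul, hb, hc, map_inv₀, map_ofNat, Complex.conj_I] at e2
  rw [e1, e2]; ring

lemma prod_Icc_split {M : Type*} [CommMonoid M] (f : ℕ → M) {n : ℕ} (hn : 2 ≤ n) :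
    ∏ i ∈ Finset.Icc 1 n, f i = f 1 * (f 2 * ∏ i ∈ Finset.Icc 3 n, f i) := by
  have h1 : Finset.Icc 1 n = insert 1 (insert 2 (Finset.Icc 3 n)) := by
    ext i; simp only [Finset.mem_Icc, Finset.mem_insert]; omega
  rw [h1, Finset.prod_insert (by simp only [Finset.mem_Icc, Finset.mem_insert]; omega),
    Finset.prod_insert (by simp only [Finset.mem_Icc]; omega)]

end aux

section aux2
variable {A X : Type*} [NonUnitalCStarAlgebra A] [PartialOrder A] [StarOrderedRing A]
    [AddCommGroup X] [Module ℂ X] [SMul Aᵐᵒᵖ X] [Norm X] [CStarModuleRight A X]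

lemma CSR_inner_add_left (x y z : X) : inner A (x + y) z = inner A x z + inner A y z := by
  rw [← CStarModuleRight.star_inner (A := A) z (x + y), CStarModuleRight.inner_add_right,
    star_add, CStarModuleRight.star_inner, CStarModuleRight.star_inner]

lemma CSR_inner_sub_right (x y z : X) : inner A x (y - z) = inner A x y - inner A x z :=
  eq_sub_of_add_eq (by rw [← CStarModuleRight.inner_add_right, sub_add_cancel])

lemma CSR_inner_sub_left (x y z : X) : inner A (x - y) z = inner A x z - inner A y z :=
  eq_sub_of_add_eq (by rw [← CSR_inner_add_left, sub_add_cancel])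

lemma CSR_inner_smul_left_complex (r : ℂ) (u v : X) :
    inner A (r • u) v = star r • inner A u v := by
  rw [← CStarModuleRight.star_inner (A := A) v (r • u),
    CStarModuleRight.inner_smul_right_complex, star_smul, CStarModuleRight.star_inner]

end aux2

/-- Corollary 2.2, inequality (2.2): a Buzano-type inequality in
pre-Hilbert `C*`-modules. -/
theorem buzano_corollary
    {A X : Type*} [NonUnitalCStarAlgebra A] [PartialOrder A] [StarOrderedRing A]
    [AddCommGroup X] [Module ℂ X] [SMul Aᵐᵒᵖ X] [Norm X] [CStarModuleRight A X]
    (φ : A →ₗ[ℂ] ℂ) (hφ : ∀ b : A, 0 ≤ b → 0 ≤ φ b)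
    (n : ℕ) (hn : 2 ≤ n) (x : ℕ → X) (z : X)
    (hz : φ (inner A z z : A) = 1) :
    ‖∏ i ∈ Finset.Icc 1 n, φ (inner A (x i) z : A)‖ ≤
      (1 / 2) *
        ((∏ i ∈ Finset.Icc 1 n, Real.sqrt (φ (inner A (x i) (x i) : A)).re)
          + ‖φ (inner A (x 1) (x 2) : A) *
              ∏ i ∈ Finset.Icc 3 n, φ (inner A (x i) z : A)‖) := by
  have hermit : ∀ u v : X, (starRingEnd ℂ) (φ (inner A v u)) = φ (inner A u v) := by
    intro u v
    rw [← phi_star φ hφ, CStarModuleRight.star_inner]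
  letI cc : PreInnerProductSpace.Core ℂ X :=
    { inner := fun u v => φ (inner A u v)
      conj_inner_symm := fun u v => hermit u v
      re_inner_nonneg := fun u => by
        have h := hφ _ (CStarModuleRight.inner_self_nonneg (A := A) (x := u))
        rw [Complex.le_def] at h
        simpa using h.1
      add_left := fun u v w => by
        show φ (inner A (u + v) w) = φ (inner A u w) + φ (inner A v w)
        rw [CSR_inner_add_left, map_add]
      smul_left := fun u v r => by
        show φ (inner A (r • u) v) = (starRingEnd ℂ) r * φ (inner A u v)
        rw [CSR_inner_smul_left_complex, map_smul, Complex.star_def, smul_eq_mul] }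
  -- Cauchy-Schwarz for the form B u v = φ ⟪u, v⟫
  have CS : ∀ u v : X, ‖φ (inner A u v)‖ ≤
      Real.sqrt (φ (inner A u u)).re * Real.sqrt (φ (inner A v v)).re := by
    intro u v
    have h : ‖φ (inner A u v)‖ * ‖φ (inner A v u)‖ ≤
        (φ (inner A u u)).re * (φ (inner A v v)).re :=
      InnerProductSpace.Core.inner_mul_inner_self_le (𝕜 := ℂ) (F := X) u v
    have hsy : ‖φ (inner A v u)‖ = ‖φ (inner A u v)‖ := by
      rw [← hermit v u]; exact RCLike.norm_conj _
    rw [hsy, ← sq] at h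
    have hre : 0 ≤ (φ (inner A u u)).re := by
      have h' := hφ _ (CStarModuleRight.inner_self_nonneg (A := A) (x := u))
      rw [Complex.le_def] at h'; simpa using h'.1
    have h2 : Real.sqrt (‖φ (inner A u v)‖ ^ 2) ≤
        Real.sqrt ((φ (inner A u u)).re * (φ (inner A v v)).re) :=
      Real.sqrt_le_sqrt h
    rw [Real.sqrt_sq (norm_nonneg _), Real.sqrt_mul hre] at h2
    exact h2
  have hzre : (φ (inner A z z)).re = 1 := by rw [hz]; simp
  -- bound on each factor against z
  have CSz : ∀ u : X, ‖φ (inner A u z)‖ ≤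
      Real.sqrt (φ (inner A u u)).re := by
    intro u
    have := CS u z
    rwa [hzre, Real.sqrt_one, mul_one] at this
  set c1 : ℂ := φ (inner A (x 1) z) with hc1
  set c2 : ℂ := φ (inner A (x 2) z) with hc2
  set b12 : ℂ := φ (inner A (x 1) (x 2)) with hb12
  set w : X := ((2 * (starRingEnd ℂ) c1) • z) - x 1 with hw
  have hzx1 : φ (inner A z (x 1)) = (starRingEnd ℂ) c1 := (hermit z (x 1)).symm
  have hzx2 : φ (inner A z (x 2)) = (starRingEnd ℂ) c2 := (hermit z (x 2)).symm
  have hww : φ (inner A w w) = φ (inner A (x 1) (x 1)) := by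
    simp only [hw, CSR_inner_sub_left, CSR_inner_sub_right,
      CSR_inner_smul_left_complex, CStarModuleRight.inner_smul_right_complex,
      map_sub, map_smul, smul_eq_mul, Complex.star_def, map_mul, Complex.conj_conj,
      map_ofNat, hz, hzx1, ← hc1]
    ring
  have hwx2 : φ (inner A w (x 2)) = 2 * c1 * (starRingEnd ℂ) c2 - b12 := by
    simp only [hw, CSR_inner_sub_left, CSR_inner_smul_left_complex,
      map_sub, map_smul, smul_eq_mul, Complex.star_def, map_mul, Complex.conj_conj,
      map_ofNat, hzx2, ← hb12]
  -- Buzano step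
  have hbuz : ‖2 * c1 * (starRingEnd ℂ) c2 - b12‖ ≤
      Real.sqrt (φ (inner A (x 1) (x 1))).re * Real.sqrt (φ (inner A (x 2) (x 2))).re := by
    have := CS w (x 2)
    rwa [hww, hwx2] at this
  have habs2 : 2 * ‖c1‖ * ‖c2‖ ≤
      Real.sqrt (φ (inner A (x 1) (x 1))).re * Real.sqrt (φ (inner A (x 2) (x 2))).re
        + ‖b12‖ := by
    have e : ‖2 * c1 * (starRingEnd ℂ) c2‖ = 2 * ‖c1‖ * ‖c2‖ := by
      simp [norm_mul, Complex.norm_conj]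
    calc 2 * ‖c1‖ * ‖c2‖
        = ‖(2 * c1 * (starRingEnd ℂ) c2 - b12) + b12‖ := by rw [sub_add_cancel, e]
      _ ≤ ‖2 * c1 * (starRingEnd ℂ) c2 - b12‖ + ‖b12‖ :=
          norm_add_le _ _
      _ ≤ _ := by gcongr
  -- product splitting
  rw [prod_Icc_split (fun i => φ (inner A (x i) z)) hn,
    prod_Icc_split (fun i => Real.sqrt (φ (inner A (x i) (x i))).re) hn]
  set P : ℂ := ∏ i ∈ Finset.Icc 3 n, φ (inner A (x i) z) with hP
  set R : ℝ := ∏ i ∈ Finset.Icc 3 n, Real.sqrt (φ (inner A (x i) (x i))).re with hR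
  have hPR : ‖P‖ ≤ R := by
    rw [hP, hR, norm_prod]
    exact Finset.prod_le_prod (fun i _ => norm_nonneg _) (fun i _ => CSz (x i))
  have hr1 : (0:ℝ) ≤ Real.sqrt (φ (inner A (x 1) (x 1))).re := Real.sqrt_nonneg _
  have hr2 : (0:ℝ) ≤ Real.sqrt (φ (inner A (x 2) (x 2))).re := Real.sqrt_nonneg _
  have hPnn : (0:ℝ) ≤ ‖P‖ := norm_nonneg _
  rw [norm_mul, norm_mul, norm_mul]
  set a1 := ‖c1‖
  set a2 := ‖c2‖
  set r1 := Real.sqrt (φ (inner A (x 1) (x 1))).re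
  set r2 := Real.sqrt (φ (inner A (x 2) (x 2))).re
  have hb12nn : (0:ℝ) ≤ ‖b12‖ := norm_nonneg _
  nlinarith [mul_le_mul_of_nonneg_right habs2 hPnn, mul_le_mul_of_nonneg_left hPR (mul_nonneg hr1 hr2)]
end

section
/- Let A be a unital C*-algebra and a ∈ A. For j = 1, 2 let D_j be a subset of ℝ and f_j : D_j → [0,∞) a map such that for every t ∈ D_j one has 1−t ∈ D_j and f_j(t)+f_j(1−t)=1. Then for all ξ₁ ∈ D₁, ξ₂ ∈ D₂ and all nonzero complex numbers α, β, γ: v(a)⁶ ≤ (max{1,|α−1|²}/(2|α|²))·‖(a*a)² + (aa*)²‖·‖a‖² + (f₁(1−ξ₁)·max{1,|β−1|²}/|αβ|²)·‖a²‖²·‖a‖² + (f₁(1−ξ₁)·f₂(1−ξ₂)/|αβ|²)·v(a³)² + (f₁(1−ξ₁)·(f₂(ξ₂)+2·max{1,|β−1|})/|αβ|²)·‖a²‖·‖a‖·v(a³) + ((f₁(ξ₁)+2·max{1,|α−1|})·max{1,|γ−1|}/(2|α|²|γ|))·‖a*a + aa*‖·‖a²‖·‖a‖² + ((f₁(ξ₁)+2·max{1,|α−1|})/(2|α|²|γ|))·‖a*a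 + aa*‖·‖a‖·v(a³). -/
open scoped ComplexOrder

/-- A state on a unital `C*`-algebra: a positive linear functional `φ` (equivalently, since the
algebra is complete, `φ (star b * b) ≥ 0` for all `b`) with `φ 1 = 1`. -/
def IsState {A : Type*} [CStarAlgebra A] (φ : A →ₗ[ℂ] ℂ) : Prop :=
  (∀ b : A, 0 ≤ φ (star b * b)) ∧ φ 1 = 1

/-- The numerical radius of an element of a unital `C*`-algebra:
`v(a) = sup { |φ(a)| : φ a state on A }`. -/
noncomputable def numRadius {A : Type*} [CStarAlgebra A] (a : A) : ℝ :=
  sSup {r : ℝ | ∃ φ : A →ₗ[ℂ] ℂ, IsState φ ∧ r = ‖φ a‖}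

section Aux

variable {A : Type*} [CStarAlgebra A] {φ : A →ₗ[ℂ] ℂ}

/-- image of `star b * b` has zero imaginary part and nonneg real part. -/
lemma state_im_zero (hpos : ∀ b : A, 0 ≤ φ (star b * b)) (b : A) :
    (φ (star b * b)).im = 0 := by
  have := hpos b
  rw [Complex.nonneg_iff] at this
  exact this.2.symm

lemma state_re_nonneg (hpos : ∀ b : A, 0 ≤ φ (star b * b)) (b : A) :
    0 ≤ (φ (star b * b)).re := by
  have := hpos b
  rw [Complex.nonneg_iff] at this
  exact this.1

/-- selfadjoint elements have real image. -/
lemma state_sa_im (hpos : ∀ b : A, 0 ≤ φ (star b * b)) (hone : φ 1 = 1)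
    {h : A} (hh : IsSelfAdjoint h) : (φ h).im = 0 := by
  have hs : star h = h := hh
  have e : star (1 + h) * (1 + h) = 1 + (h + h + star h * h) := by
    rw [star_add, star_one, hs]; noncomm_ring
  have := state_im_zero hpos (1 + h)
  rw [e] at this
  simp only [map_add, hone, Complex.add_im, Complex.one_im] at this
  have h2 := state_im_zero hpos h
  linarith [this, h2]

/-- A state is hermitian. -/
lemma state_star (hpos : ∀ b : A, 0 ≤ φ (star b * b)) (hone : φ 1 = 1)
    (x : A) : φ (star x) = starRingEnd ℂ (φ x) := by
  set h : A := ((1:ℂ)/2) • (x + star x) with hh_def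
  set k : A := (-(1/2) * Complex.I) • (x - star x) with hk_def
  have hh : IsSelfAdjoint h := by
    rw [IsSelfAdjoint, hh_def, star_smul, star_add, star_star]
    simp [add_comm]
  have hk : IsSelfAdjoint k := by
    have hc : star (-(1/2) * Complex.I) = (1/2) * Complex.I := by
      simp [Complex.star_def, Complex.conj_I]
    have : star k = ((1/2) * Complex.I) • (star x - x) := by
      rw [hk_def, star_smul, star_sub, star_star, hc]
    rw [IsSelfAdjoint, this, hk_def]
    module
  have hx : x = h + Complex.I • k := by
    rw [hh_def, hk_def, smul_smul]
    have : Complex.I * (-(1/2) * Complex.I) = 1/2 := by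
      rw [mul_comm, mul_assoc, Complex.I_mul_I]; ring
    rw [this]
    module
  have hxs : star x = h - Complex.I • k := by
    rw [hh_def, hk_def, smul_smul]
    have : Complex.I * (-(1/2) * Complex.I) = 1/2 := by
      rw [mul_comm, mul_assoc, Complex.I_mul_I]; ring
    rw [this]
    module
  have him := state_sa_im hpos hone hh
  have kim := state_sa_im hpos hone hk
  have hcj : starRingEnd ℂ (φ h) = φ h := Complex.conj_eq_iff_im.mpr him
  have kcj : starRingEnd ℂ (φ k) = φ k := Complex.conj_eq_iff_im.mpr kim
  rw [hxs, hx]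
  simp only [map_add, map_sub, map_smul, smul_eq_mul, map_mul, Complex.conj_I, hcj, kcj]
  ring

lemma quad_nonneg {a b c : ℝ} (ha : 0 ≤ a) (hb : 0 ≤ b) (hc : 0 ≤ c)
    (h : ∀ s : ℝ, 0 ≤ c - 2*b*s + a*s^2) : b^2 ≤ a*c := by
  rcases eq_or_lt_of_le ha with h0 | hpos
  · have hb0 : b = 0 := by
      by_contra hb0
      have hb' : 0 < b := lt_of_le_of_ne hb (Ne.symm hb0)
      have := h ((c+1)/(2*b))
      rw [← h0] at this
      field_simp at this
      nlinarith
    nlinarith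
  · have := h (b/a)
    have e : c - 2*b*(b/a) + a*(b/a)^2 = c - b^2/a := by field_simp; ring
    rw [e] at this
    have := (div_le_iff₀ hpos).mp (by linarith : b^2/a ≤ c)
    linarith [this]

lemma state_cs (hpos : ∀ b : A, 0 ≤ φ (star b * b)) (hone : φ 1 = 1) (u v : A) :
    ‖φ (star v * u)‖ ^ 2 ≤ (φ (star u * u)).re * (φ (star v * v)).re := by
  set z : ℂ := φ (star v * u) with hz
  set az : ℝ := ‖z‖ with haz
  set pu : ℝ := (φ (star u * u)).re with hpu
  set pv : ℝ := (φ (star v * v)).re with hpv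
  have huv : φ (star u * v) = starRingEnd ℂ z := by
    have := state_star hpos hone (star v * u)
    rwa [star_mul, star_star] at this
  have key : ∀ s : ℝ, 0 ≤ pu - 2*(az^2)*s + (az^2*pv)*s^2 := by
    intro s
    have alg : star (u - ((s:ℂ)*z) • v) * (u - ((s:ℂ)*z) • v)
        = star u * u - ((s:ℂ)*z) • (star u * v) - (star ((s:ℂ)*z)) • (star v * u)
          + (star ((s:ℂ)*z) * ((s:ℂ)*z)) • (star v * v) := by
      rw [star_sub, star_smul]
      rw [sub_mul, mul_sub, mul_sub, smul_mul_assoc, smul_mul_assoc,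
        mul_smul_comm, mul_smul_comm, smul_smul]
      abel
    have h0 := state_re_nonneg hpos (u - ((s:ℂ)*z) • v)
    rw [alg] at h0
    simp only [map_add, map_sub, map_smul, smul_eq_mul, huv] at h0
    have him_u := state_im_zero hpos u
    have him_v := state_im_zero hpos v
    have habs : z.re^2 + z.im^2 = az^2 := by
      rw [haz, Complex.sq_norm, Complex.normSq_apply]; ring
    simp only [Complex.add_re, Complex.sub_re, Complex.mul_re, Complex.mul_im,
      Complex.star_def, Complex.conj_re, Complex.conj_im, Complex.ofReal_re,
      Complex.ofReal_im, ← hz, ← hpu, ← hpv] at h0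
    rw [him_v] at h0
    rw [← habs]
    linarith [h0]
  have h2 := quad_nonneg (a := az^2*pv) (b := az^2) (c := pu)
    (mul_nonneg (sq_nonneg az) (state_re_nonneg hpos v)) (sq_nonneg az)
    (state_re_nonneg hpos u) (fun s => by have := key s; linarith)
  rcases eq_or_lt_of_le (by positivity : (0:ℝ) ≤ az) with h0 | hpos'
  · rw [← h0]; simpa using mul_nonneg (state_re_nonneg hpos u) (state_re_nonneg hpos v)
  · nlinarith [h2, mul_pos hpos' hpos']

lemma state_p_le_norm (hpos : ∀ b : A, 0 ≤ φ (star b * b)) (hone : φ 1 = 1) (x : A) :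
    (φ (star x * x)).re ≤ ‖x‖^2 := by
  letI := CStarAlgebra.spectralOrder A
  haveI := CStarAlgebra.spectralOrderedRing A
  have hle : star x * x ≤ algebraMap ℝ A (‖x‖^2) :=
    CStarAlgebra.star_mul_le_algebraMap_norm_sq
  have key : ∀ y : A, 0 ≤ y → 0 ≤ φ y := by
    intro y hy
    rw [StarOrderedRing.nonneg_iff] at hy
    induction hy using AddSubmonoid.closure_induction with
    | mem z hz => obtain ⟨c, rfl⟩ := hz; exact hpos c
    | zero => simp
    | add z w _ _ hz hw => rw [map_add]; exact add_nonneg hz hw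
  have h2 : 0 ≤ φ (algebraMap ℝ A (‖x‖^2) - star x * x) := key _ (sub_nonneg.mpr hle)
  have halg : φ (algebraMap ℝ A (‖x‖^2)) = ((‖x‖^2 : ℝ) : ℂ) := by
    rw [IsScalarTower.algebraMap_apply ℝ ℂ A, Algebra.algebraMap_eq_smul_one, map_smul,
      hone, smul_eq_mul, mul_one]
    rfl
  rw [map_sub, halg] at h2
  rw [Complex.nonneg_iff] at h2
  have h3 := h2.1
  simp only [Complex.sub_re, Complex.ofReal_re] at h3
  have : ((‖x‖:ℂ)^2).re = ‖x‖^2 := by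
    rw [← Complex.ofReal_pow, Complex.ofReal_re]
  linarith [h3]

lemma state_abs_le_norm (hpos : ∀ b : A, 0 ≤ φ (star b * b)) (hone : φ 1 = 1) (x : A) :
    ‖φ x‖ ≤ ‖x‖ := by
  have h := state_cs hpos hone x 1
  simp only [star_one, one_mul, mul_one] at h
  rw [hone] at h
  simp only [Complex.one_re, mul_one] at h
  have h2 := (state_p_le_norm hpos hone x)
  exact le_of_pow_le_pow_left₀ (two_ne_zero) (norm_nonneg x) (le_trans h h2)

lemma cabs_sub_le (x y : ℂ) : ‖x - y‖ ≤ ‖x‖ + ‖y‖ := by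
  simpa using norm_sub_le x y

lemma state_buzano (hpos : ∀ b : A, 0 ≤ φ (star b * b)) (hone : φ 1 = 1)
    (b c : A) (α : ℂ) (hα : α ≠ 0) :
    ‖φ b‖ * ‖φ c‖ ≤
      (max 1 (‖α - 1‖) *
          Real.sqrt ((φ (star b * b)).re * (φ (c * star c)).re)
        + ‖φ (c * b)‖) / ‖α‖ := by
  set x' : A := b - φ b • 1 with hx'
  set y' : A := star c - (starRingEnd ℂ (φ c)) • 1 with hy'
  have hsb := state_star hpos hone b
  have hsc := state_star hpos hone c
  have hsy : star y' = c - φ c • 1 := by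
    rw [hy', star_sub, star_star, star_smul, star_one]
    congr 1
    simp [Complex.star_def]
  have habs2 : ∀ z : ℂ, ((‖z‖ ^ 2 : ℝ) : ℂ) = starRingEnd ℂ z * z := by
    intro z
    rw [Complex.sq_norm, Complex.normSq_eq_conj_mul_self]
  -- (1)
  have hxy : φ (star y' * x') = φ (c * b) - φ b * φ c := by
    have e : star y' * x' = c * b - φ b • c - φ c • b + (φ c * φ b) • (1:A) := by
      rw [hsy, hx']
      simp only [sub_mul, mul_sub, smul_mul_assoc, mul_smul_comm, smul_smul, smul_sub,
        mul_one, one_mul]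
      module
    rw [e]
    simp only [map_add, map_sub, map_smul, smul_eq_mul, hone, mul_one]
    ring
  -- (2)
  have hxx : φ (star x' * x') = φ (star b * b) - ((‖φ b‖ ^ 2 : ℝ) : ℂ) := by
    have hsx : star x' = star b - (starRingEnd ℂ (φ b)) • 1 := by
      rw [hx', star_sub, star_smul, star_one]
      rfl
    have e : star x' * x' = star b * b - φ b • star b - (starRingEnd ℂ (φ b)) • b
        + ((starRingEnd ℂ (φ b)) * φ b) • (1:A) := by
      rw [hsx, hx']
      simp only [sub_mul, mul_sub, smul_mul_assoc, mul_smul_comm, smul_smul, smul_sub,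
        mul_one, one_mul]
      module
    rw [e]
    simp only [map_add, map_sub, map_smul, smul_eq_mul, hone, mul_one, hsb]
    rw [habs2]
    ring
  -- (3)
  have hyy : φ (star y' * y') = φ (c * star c) - ((‖φ c‖ ^ 2 : ℝ) : ℂ) := by
    have e : star y' * y' = c * star c - (starRingEnd ℂ (φ c)) • c - φ c • star c
        + (φ c * starRingEnd ℂ (φ c)) • (1:A) := by
      rw [hsy, hy']
      simp only [sub_mul, mul_sub, smul_mul_assoc, mul_smul_comm, smul_smul, smul_sub,
        mul_one, one_mul]
      module
    rw [e]
    simp only [map_add, map_sub, map_smul, smul_eq_mul, hone, mul_one, hsc]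
    rw [habs2]
    ring
  set rb : ℝ := ‖φ b‖ with hrb
  set rc : ℝ := ‖φ c‖ with hrc
  set pb : ℝ := (φ (star b * b)).re with hpb
  set qc : ℝ := (φ (c * star c)).re with hqc
  set P : ℝ := pb - rb^2 with hP
  set Q : ℝ := qc - rc^2 with hQ
  have hPre : (φ (star x' * x')).re = P := by
    rw [hxx, Complex.sub_re, Complex.ofReal_re]
  have hQre : (φ (star y' * y')).re = Q := by
    rw [hyy, Complex.sub_re, Complex.ofReal_re]
  have hPnn : 0 ≤ P := hPre ▸ state_re_nonneg hpos x'
  have hQnn : 0 ≤ Q := hQre ▸ state_re_nonneg hpos y'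
  have hcross : ‖φ (star y' * x')‖ ≤ Real.sqrt (P * Q) := by
    have h := state_cs hpos hone x' y'
    rw [hPre, hQre] at h
    have h2 := Real.sqrt_le_sqrt h
    rwa [Real.sqrt_sq (norm_nonneg _)] at h2
  have tri : ‖α‖ * (rb * rc) ≤
      ‖α - 1‖ * (rb * rc) + ‖φ (star y' * x')‖
        + ‖φ (c * b)‖ := by
    have e2 : α * (φ b * φ c) = ((α - 1) * (φ b * φ c) - φ (star y' * x')) + φ (c * b) := by
      rw [hxy]; ring
    calc ‖α‖ * (rb * rc) = ‖α * (φ b * φ c)‖ := by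
          rw [norm_mul, norm_mul, hrb, hrc]
      _ = ‖((α - 1) * (φ b * φ c) - φ (star y' * x')) + φ (c * b)‖ := by rw [e2]
      _ ≤ ‖(α - 1) * (φ b * φ c) - φ (star y' * x')‖ + ‖φ (c * b)‖ :=
          norm_add_le _ _
      _ ≤ (‖(α - 1) * (φ b * φ c)‖ + ‖φ (star y' * x')‖)
            + ‖φ (c * b)‖ := by
          have := cabs_sub_le ((α - 1) * (φ b * φ c)) (φ (star y' * x'))
          linarith
      _ = ‖α - 1‖ * (rb * rc) + ‖φ (star y' * x')‖
            + ‖φ (c * b)‖ := by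
          rw [norm_mul, norm_mul, hrb, hrc]
  set M : ℝ := max 1 (‖α - 1‖) with hM
  have hM1 : ‖α - 1‖ ≤ M := le_max_right _ _
  have hM2 : (1:ℝ) ≤ M := le_max_left _ _
  have amgm : ‖α - 1‖ * (rb * rc) + Real.sqrt (P * Q) ≤ M * Real.sqrt (pb * qc) := by
    have hsP : Real.sqrt (P * Q) = Real.sqrt P * Real.sqrt Q := Real.sqrt_mul hPnn _
    have h2d : rb * rc + Real.sqrt P * Real.sqrt Q ≤ Real.sqrt (pb * qc) := by
      rw [show pb = rb^2 + P by rw [hP]; ring, show qc = rc^2 + Q by rw [hQ]; ring]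
      rw [show rb^2 + P = rb^2 + Real.sqrt P ^ 2 by rw [Real.sq_sqrt hPnn],
          show rc^2 + Q = rc^2 + Real.sqrt Q ^ 2 by rw [Real.sq_sqrt hQnn]]
      have hsq : (rb * rc + Real.sqrt P * Real.sqrt Q)^2
          ≤ (rb^2 + Real.sqrt P^2) * (rc^2 + Real.sqrt Q^2) := by
        nlinarith [sq_nonneg (rb * Real.sqrt Q - Real.sqrt P * rc)]
      have h3 := Real.sqrt_le_sqrt hsq
      rwa [Real.sqrt_sq (by positivity)] at h3
    have e1 : ‖α - 1‖ * (rb * rc) ≤ M * (rb * rc) :=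
      mul_le_mul_of_nonneg_right hM1 (by positivity)
    have e2 : Real.sqrt P * Real.sqrt Q ≤ M * (Real.sqrt P * Real.sqrt Q) :=
      le_mul_of_one_le_left (by positivity) hM2
    have e3 : M * (rb * rc + Real.sqrt P * Real.sqrt Q) ≤ M * Real.sqrt (pb * qc) :=
      mul_le_mul_of_nonneg_left h2d (le_trans zero_le_one hM2)
    rw [hsP]
    nlinarith [e1, e2, e3]
  have hαpos : 0 < ‖α‖ := norm_pos_iff.mpr hα
  rw [le_div_iff₀ hαpos]
  calc rb * rc * ‖α‖ = ‖α‖ * (rb * rc) := by ring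
    _ ≤ ‖α - 1‖ * (rb * rc) + ‖φ (star y' * x')‖
          + ‖φ (c * b)‖ := tri
    _ ≤ ‖α - 1‖ * (rb * rc) + Real.sqrt (P * Q) + ‖φ (c * b)‖ := by
        linarith [hcross]
    _ ≤ M * Real.sqrt (pb * qc) + ‖φ (c * b)‖ := by linarith [amgm]

lemma max_one_sq {x : ℝ} (hx : 0 ≤ x) : max 1 (x^2) = (max 1 x)^2 := by
  rcases le_total x 1 with h | h
  · rw [max_eq_left (by nlinarith), max_eq_left h, one_pow]
  · rw [max_eq_right (by nlinarith), max_eq_right h]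

lemma state_sa_sq (hpos : ∀ b : A, 0 ≤ φ (star b * b)) (hone : φ 1 = 1)
    (h : A) (hsa : star h = h) : ((φ h).re)^2 ≤ (φ (h*h)).re := by
  have cs := state_cs hpos hone h 1
  rw [star_one, one_mul, mul_one] at cs
  rw [hone] at cs
  simp only [Complex.one_re, mul_one] at cs
  rw [hsa] at cs
  have : ((φ h).re)^2 ≤ ‖φ h‖ ^ 2 := by
    rw [Complex.sq_norm, Complex.normSq_apply]
    nlinarith [sq_nonneg (φ h).im]
  linarith

lemma amgm_half (x y : ℝ) : x*y ≤ (x^2+y^2)/2 := by nlinarith [sq_nonneg (x-y)]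

lemma sqrt_amgm {x y : ℝ} (hx : 0 ≤ x) (hy : 0 ≤ y) : Real.sqrt (x*y) ≤ (x+y)/2 := by
  have h : x*y ≤ ((x+y)/2)^2 := by nlinarith [sq_nonneg (x-y)]
  have := Real.sqrt_le_sqrt h
  rwa [Real.sqrt_sq (by positivity)] at this

set_option maxHeartbeats 1000000 in
lemma state_main (hpos : ∀ b : A, 0 ≤ φ (star b * b)) (hone : φ 1 = 1)
    (a : A) (f₁ξ f₁ξ' f₂ξ f₂ξ' : ℝ)
    (h1nn : 0 ≤ f₁ξ) (h1nn' : 0 ≤ f₁ξ') (h2nn : 0 ≤ f₂ξ) (h2nn' : 0 ≤ f₂ξ')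
    (hs1 : f₁ξ + f₁ξ' = 1) (hs2 : f₂ξ + f₂ξ' = 1)
    (α β γ : ℂ) (hα : α ≠ 0) (hβ : β ≠ 0) (hγ : γ ≠ 0)
    (v3 : ℝ) (hv3 : ‖φ (a^3)‖ ≤ v3) :
    ‖φ a‖ ^ 6 ≤
      max 1 (‖α - 1‖ ^ 2) / (2 * ‖α‖ ^ 2) *
          ‖(star a * a) ^ 2 + (a * star a) ^ 2‖ * ‖a‖ ^ 2
        + f₁ξ' * max 1 (‖β - 1‖ ^ 2) / ‖α * β‖ ^ 2 *
            ‖a ^ 2‖ ^ 2 * ‖a‖ ^ 2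
        + f₁ξ' * f₂ξ' / ‖α * β‖ ^ 2 * v3 ^ 2
        + f₁ξ' * (f₂ξ + 2 * max 1 (‖β - 1‖)) / ‖α * β‖ ^ 2 *
            ‖a ^ 2‖ * ‖a‖ * v3
        + (f₁ξ + 2 * max 1 (‖α - 1‖)) * max 1 (‖γ - 1‖) /
              (2 * ‖α‖ ^ 2 * ‖γ‖) *
            ‖star a * a + a * star a‖ * ‖a ^ 2‖ * ‖a‖ ^ 2
        + (f₁ξ + 2 * max 1 (‖α - 1‖)) /
              (2 * ‖α‖ ^ 2 * ‖γ‖) *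
            ‖star a * a + a * star a‖ * ‖a‖ * v3 := by
  rw [max_one_sq (norm_nonneg (α - 1)), max_one_sq (norm_nonneg (β - 1)),
    norm_mul]
  -- abbreviations
  set r : ℝ := ‖φ a‖ with hr
  set r2 : ℝ := ‖φ (a^2)‖ with hr2
  set r3 : ℝ := ‖φ (a^3)‖ with hr3
  set pa : ℝ := (φ (star a * a)).re with hpa
  set qa : ℝ := (φ (a * star a)).re with hqa
  set m : ℝ := Real.sqrt (pa * qa) with hm
  set na : ℝ := ‖a‖ with hna
  set n2 : ℝ := ‖a^2‖ with hn2
  set X : ℝ := ‖(star a * a)^2 + (a * star a)^2‖ with hX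
  set N : ℝ := ‖star a * a + a * star a‖ with hN
  set Mα : ℝ := max 1 (‖α - 1‖) with hMα
  set Mβ : ℝ := max 1 (‖β - 1‖) with hMβ
  set Mγ : ℝ := max 1 (‖γ - 1‖) with hMγ
  set aα : ℝ := ‖α‖ with haα
  set aβ : ℝ := ‖β‖ with haβ
  set aγ : ℝ := ‖γ‖ with haγ
  have haαpos : 0 < aα := norm_pos_iff.mpr hα
  have haβpos : 0 < aβ := norm_pos_iff.mpr hβ
  have haγpos : 0 < aγ := norm_pos_iff.mpr hγ
  have hMα1 : (1:ℝ) ≤ Mα := le_max_left _ _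
  have hMβ1 : (1:ℝ) ≤ Mβ := le_max_left _ _
  have hMγ1 : (1:ℝ) ≤ Mγ := le_max_left _ _
  have hrnn : 0 ≤ r := norm_nonneg _
  have hr2nn : 0 ≤ r2 := norm_nonneg _
  have hr3nn : 0 ≤ r3 := norm_nonneg _
  have hpann : 0 ≤ pa := state_re_nonneg hpos a
  have hqann : 0 ≤ qa := by
    rw [hqa, show a * star a = star (star a) * star a by rw [star_star]]
    exact state_re_nonneg hpos (star a)
  have hmnn : 0 ≤ m := Real.sqrt_nonneg _
  have hnann : 0 ≤ na := norm_nonneg _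
  have hn2nn : 0 ≤ n2 := norm_nonneg _
  have hXnn : 0 ≤ X := norm_nonneg _
  have hNnn : 0 ≤ N := norm_nonneg _
  have hv3nn : 0 ≤ v3 := le_trans hr3nn hv3
  -- (G1)  r^2 ≤ (Mα*m + r2)/aα
  have G1 : r * r ≤ (Mα * m + r2) / aα := by
    have := state_buzano hpos hone a a α hα
    rwa [show a * a = a^2 by rw [sq], ← hr, ← hr2, ← hpa, ← hqa, ← hm, ← hMα, ← haα] at this
  -- (G3β)  r2*r ≤ (Mβ*(n2*na) + r3)/aβ
  have pa2_le : (φ (star (a^2) * (a^2))).re ≤ n2^2 := state_p_le_norm hpos hone (a^2)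
  have qa_le : qa ≤ na^2 := by
    have := state_p_le_norm hpos hone (star a)
    rwa [star_star, norm_star, ← hqa, ← hna] at this
  have sqrt_le : Real.sqrt ((φ (star (a^2) * (a^2))).re * qa) ≤ n2 * na := by
    have h1 : (φ (star (a^2) * (a^2))).re * qa ≤ n2^2 * na^2 := by
      have h0 : 0 ≤ (φ (star (a^2) * (a^2))).re := state_re_nonneg hpos (a^2)
      exact mul_le_mul pa2_le qa_le hqann (by positivity)
    calc Real.sqrt ((φ (star (a^2) * (a^2))).re * qa) ≤ Real.sqrt (n2^2 * na^2) :=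
          Real.sqrt_le_sqrt h1
      _ = n2 * na := by
          rw [show n2^2 * na^2 = (n2*na)^2 by ring, Real.sqrt_sq (by positivity)]
  have G3 : ∀ δ : ℂ, δ ≠ 0 → r2 * r ≤
      (max 1 (‖δ - 1‖) * (n2 * na) + r3) / ‖δ‖ := by
    intro δ hδ
    have hb := state_buzano hpos hone (a^2) a δ hδ
    rw [show a * a^2 = a^3 from (pow_succ' a 2).symm] at hb
    have step : max 1 (‖δ - 1‖) *
          Real.sqrt ((φ (star (a^2) * (a^2))).re * (φ (a * star a)).re) + ‖φ (a^3)‖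
        ≤ max 1 (‖δ - 1‖) * (n2 * na) + r3 := by
      have hMδ : (0:ℝ) ≤ max 1 (‖δ - 1‖) := le_trans zero_le_one (le_max_left _ _)
      have := mul_le_mul_of_nonneg_left sqrt_le hMδ
      rw [← hr3, ← hqa]
      linarith [this]
    calc r2 * r ≤ _ := hb
      _ ≤ (max 1 (‖δ - 1‖) * (n2 * na) + r3) / ‖δ‖ :=
          (div_le_div_iff_of_pos_right (norm_pos_iff.mpr hδ)).mpr step
  -- (G4) r2 ≤ m
  have G4 : r2 ≤ m := by
    have cs2 := state_cs hpos hone a (star a)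
    rw [star_star] at cs2
    rw [← hpa, ← hqa] at cs2
    rw [show a * a = a^2 from (sq a).symm] at cs2
    rw [← hr2] at cs2
    have := Real.sqrt_le_sqrt cs2
    rwa [Real.sqrt_sq hr2nn, ← hm] at this
  -- (G5) m^2 ≤ X/2
  have hm2 : m^2 = pa * qa := Real.sq_sqrt (mul_nonneg hpann hqann)
  have G5 : m^2 ≤ X/2 := by
    have hP2 : pa^2 ≤ (φ ((star a * a)*(star a * a))).re :=
      state_sa_sq hpos hone (star a * a) (by rw [star_mul, star_star])
    have hQ2 : qa^2 ≤ (φ ((a * star a)*(a * star a))).re :=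
      state_sa_sq hpos hone (a * star a) (by rw [star_mul, star_star])
    have hsum : (φ ((star a * a)*(star a * a))).re + (φ ((a * star a)*(a * star a))).re ≤ X := by
      have he : φ ((star a * a)*(star a * a)) + φ ((a * star a)*(a * star a))
          = φ ((star a * a)^2 + (a * star a)^2) := by
        rw [map_add, sq, sq]
      have habs := state_abs_le_norm hpos hone ((star a * a)^2 + (a * star a)^2)
      have hre : (φ ((star a * a)^2 + (a * star a)^2)).re
          ≤ ‖φ ((star a * a)^2 + (a * star a)^2)‖ := Complex.re_le_norm _
      have he2 : (φ ((star a * a)*(star a * a))).re + (φ ((a * star a)*(a * star a))).re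
          = (φ ((star a * a)^2 + (a * star a)^2)).re := by
        rw [← he, Complex.add_re]
      rw [he2]
      linarith only [habs, hre]
    rw [hm2]
    linarith only [amgm_half pa qa, hP2, hQ2, hsum]
  -- (G6) m ≤ N/2
  have G6 : m ≤ N/2 := by
    have hsum : pa + qa ≤ N := by
      have he : φ (star a * a) + φ (a * star a) = φ (star a * a + a * star a) := by
        rw [map_add]
      have habs := state_abs_le_norm hpos hone (star a * a + a * star a)
      have hre : (φ (star a * a + a * star a)).re
          ≤ ‖φ (star a * a + a * star a)‖ := Complex.re_le_norm _
      have h2 : pa + qa = (φ (star a * a + a * star a)).re := by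
        rw [hpa, hqa, ← Complex.add_re, he]
      rw [h2]
      linarith only [habs, hre]
    have h4 := sqrt_amgm hpann hqann
    rw [← hm] at h4
    linarith only [h4, hsum]
  -- (G7)
  have hrna : r ≤ na := state_abs_le_norm hpos hone a
  have h3bound : r3 ≤ n2 * na := by
    have h1 := state_abs_le_norm hpos hone (a^3)
    have h2 : ‖a^3‖ ≤ n2 * na := by
      rw [show a^3 = a^2 * a from pow_succ a 2]
      exact norm_mul_le _ _
    exact le_trans h1 h2
  -- master expansion
  have key0 : r^6 * aα^2 ≤ Mα^2*m^2*r^2 + (2*Mα + f₁ξ)*(m*((r2*r)*r)) + f₁ξ'*(r2*r)^2 := by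
    have h1 : r*r*aα ≤ Mα*m + r2 := (le_div_iff₀ haαpos).mp G1
    have hnn : 0 ≤ r*r*aα := mul_nonneg (mul_nonneg hrnn hrnn) haαpos.le
    have h2 : (r*r*aα)^2 ≤ (Mα*m + r2)^2 := pow_le_pow_left₀ hnn h1 2
    have h3 : (r*r*aα)^2 * r^2 ≤ (Mα*m+r2)^2 * r^2 :=
      mul_le_mul_of_nonneg_right h2 (sq_nonneg r)
    have h4 : f₁ξ*(r2*(r2*r^2)) ≤ f₁ξ*(m*(r2*r^2)) :=
      mul_le_mul_of_nonneg_left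
        (mul_le_mul_of_nonneg_right G4 (mul_nonneg hr2nn (sq_nonneg r))) h1nn
    calc r^6*aα^2 = (r*r*aα)^2*r^2 := by ring
      _ ≤ (Mα*m+r2)^2*r^2 := h3
      _ = Mα^2*m^2*r^2 + 2*Mα*(m*((r2*r)*r))
          + (f₁ξ*(r2*(r2*r^2)) + f₁ξ'*(r2*(r2*r^2))) := by
          linear_combination (-(r2*(r2*r^2)))*hs1
      _ ≤ Mα^2*m^2*r^2 + 2*Mα*(m*((r2*r)*r))
          + (f₁ξ*(m*(r2*r^2)) + f₁ξ'*(r2*(r2*r^2))) := by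
          linarith only [h4]
      _ = Mα^2*m^2*r^2 + (2*Mα + f₁ξ)*(m*((r2*r)*r)) + f₁ξ'*(r2*r)^2 := by ring
  -- bound A
  have keyA : Mα^2*m^2*r^2 ≤ Mα^2*((X/2)*na^2) := by
    have h6 : r^2 ≤ na^2 := pow_le_pow_left₀ hrnn hrna 2
    have h7 : m^2*r^2 ≤ (X/2)*na^2 :=
      mul_le_mul G5 h6 (sq_nonneg r) (by linarith only [hXnn])
    calc Mα^2*m^2*r^2 = Mα^2*(m^2*r^2) := by ring
      _ ≤ Mα^2*((X/2)*na^2) := mul_le_mul_of_nonneg_left h7 (sq_nonneg Mα)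
  -- bound B
  have c_nn : (0:ℝ) ≤ 2*Mα + f₁ξ := by linarith only [hMα1, h1nn]
  have hMγ0 : (0:ℝ) ≤ Mγ := by linarith only [hMγ1]
  have hMβ0 : (0:ℝ) ≤ Mβ := by linarith only [hMβ1]
  have hD_nn : (0:ℝ) ≤ (Mγ*(n2*na)+v3)/aγ := by
    apply div_nonneg _ haγpos.le
    have := mul_nonneg hMγ0 (mul_nonneg hn2nn hnann)
    linarith only [this, hv3nn]
  have hr2r : r2*r ≤ (Mγ*(n2*na)+v3)/aγ := by
    refine le_trans (G3 γ hγ) ?_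
    rw [← hMγ, ← haγ]
    apply (div_le_div_iff_of_pos_right haγpos).mpr
    linarith only [hv3]
  have keyB : (2*Mα + f₁ξ)*(m*((r2*r)*r))
      ≤ (2*Mα + f₁ξ)*((N/2)*(((Mγ*(n2*na)+v3)/aγ)*na)) := by
    apply mul_le_mul_of_nonneg_left _ c_nn
    have step1 : m*(r2*r) ≤ (N/2)*((Mγ*(n2*na)+v3)/aγ) :=
      mul_le_mul G6 hr2r (mul_nonneg hr2nn hrnn) (by linarith only [hNnn])
    have step2 : (m*(r2*r))*r ≤ ((N/2)*((Mγ*(n2*na)+v3)/aγ))*na :=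
      mul_le_mul step1 hrna hrnn (mul_nonneg (by linarith only [hNnn]) hD_nn)
    calc m*((r2*r)*r) = (m*(r2*r))*r := by ring
      _ ≤ ((N/2)*((Mγ*(n2*na)+v3)/aγ))*na := step2
      _ = (N/2)*(((Mγ*(n2*na)+v3)/aγ)*na) := by ring
  -- bound C
  have keyC : f₁ξ'*(r2*r)^2
      ≤ f₁ξ'*((Mβ^2*(n2^2*na^2) + (2*Mβ+f₂ξ)*((n2*na)*v3) + f₂ξ'*v3^2)/aβ^2) := by
    apply mul_le_mul_of_nonneg_left _ h1nn'
    have hb := G3 β hβ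
    rw [← hMβ, ← haβ] at hb
    have hsq : (r2*r)^2 ≤ ((Mβ*(n2*na)+r3)/aβ)^2 :=
      pow_le_pow_left₀ (mul_nonneg hr2nn hrnn) hb 2
    have hβne : aβ ≠ 0 := haβpos.ne'
    have expand : ((Mβ*(n2*na)+r3)/aβ)^2
        = (Mβ^2*(n2^2*na^2) + 2*Mβ*((n2*na)*r3) + r3^2)/aβ^2 := by
      field_simp
      ring
    have inner : Mβ^2*(n2^2*na^2) + 2*Mβ*((n2*na)*r3) + r3^2
        ≤ Mβ^2*(n2^2*na^2) + (2*Mβ+f₂ξ)*((n2*na)*v3) + f₂ξ'*v3^2 := by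
      have i1 : f₂ξ*(r3*r3) ≤ f₂ξ*((n2*na)*v3) :=
        mul_le_mul_of_nonneg_left
          (mul_le_mul h3bound hv3 hr3nn (mul_nonneg hn2nn hnann)) h2nn
      have i2 : f₂ξ'*(r3*r3) ≤ f₂ξ'*(v3*v3) :=
        mul_le_mul_of_nonneg_left (mul_le_mul hv3 hv3 hr3nn hv3nn) h2nn'
      have i3 : 2*Mβ*((n2*na)*r3) ≤ 2*Mβ*((n2*na)*v3) := by
        apply mul_le_mul_of_nonneg_left _ (by linarith only [hMβ0] : (0:ℝ) ≤ 2*Mβ)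
        exact mul_le_mul_of_nonneg_left hv3 (mul_nonneg hn2nn hnann)
      have e3 : r3^2 = f₂ξ*(r3*r3) + f₂ξ'*(r3*r3) := by
        linear_combination (r3*r3)*hs2.symm
      have e4 : f₂ξ'*(v3*v3) = f₂ξ'*v3^2 := by ring
      linarith only [i1, i2, i3, e3, e4]
    calc (r2*r)^2 ≤ ((Mβ*(n2*na)+r3)/aβ)^2 := hsq
      _ = (Mβ^2*(n2^2*na^2) + 2*Mβ*((n2*na)*r3) + r3^2)/aβ^2 := expand
      _ ≤ (Mβ^2*(n2^2*na^2) + (2*Mβ+f₂ξ)*((n2*na)*v3) + f₂ξ'*v3^2)/aβ^2 :=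
          (div_le_div_iff_of_pos_right (pow_pos haβpos 2)).mpr inner
  -- final assembly
  have sum : r^6 * aα^2 ≤ Mα^2*((X/2)*na^2)
      + (2*Mα + f₁ξ)*((N/2)*(((Mγ*(n2*na)+v3)/aγ)*na))
      + f₁ξ'*((Mβ^2*(n2^2*na^2) + (2*Mβ+f₂ξ)*((n2*na)*v3) + f₂ξ'*v3^2)/aβ^2) := by
    linarith only [key0, keyA, keyB, keyC]
  have final : r^6 ≤ (Mα^2*((X/2)*na^2)
      + (2*Mα + f₁ξ)*((N/2)*(((Mγ*(n2*na)+v3)/aγ)*na))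
      + f₁ξ'*((Mβ^2*(n2^2*na^2) + (2*Mβ+f₂ξ)*((n2*na)*v3) + f₂ξ'*v3^2)/aβ^2))/aα^2 := by
    rw [le_div_iff₀ (pow_pos haαpos 2)]
    linarith only [sum]
  refine le_trans final (le_of_eq ?_)
  have hαne : aα ≠ 0 := haαpos.ne'
  have hβne : aβ ≠ 0 := haβpos.ne'
  have hγne : aγ ≠ 0 := haγpos.ne'
  field_simp
  ring

lemma numRadius_bddAbove {A : Type*} [CStarAlgebra A] (x : A) :
    BddAbove {r : ℝ | ∃ φ : A →ₗ[ℂ] ℂ, IsState φ ∧ r = ‖φ x‖} := by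
  refine ⟨‖x‖, ?_⟩
  rintro r ⟨φ, hφ, rfl⟩
  exact state_abs_le_norm hφ.1 hφ.2 x

lemma numRadius_nonneg {A : Type*} [CStarAlgebra A] (x : A) : 0 ≤ numRadius x := by
  apply Real.sSup_nonneg
  rintro r ⟨φ, hφ, rfl⟩
  exact norm_nonneg _

lemma abs_le_numRadius {A : Type*} [CStarAlgebra A] {φ : A →ₗ[ℂ] ℂ} (hφ : IsState φ) (x : A) :
    ‖φ x‖ ≤ numRadius x :=
  le_csSup (numRadius_bddAbove x) ⟨φ, hφ, rfl⟩

end Aux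

/-- Theorem 2.18: a family of upper bounds for `v(a)⁶`. -/
theorem numRadius_pow_six_le
    {A : Type*} [CStarAlgebra A] (a : A)
    (D₁ D₂ : Set ℝ) (f₁ f₂ : ℝ → ℝ)
    (hD₁ : ∀ t ∈ D₁, (1 - t) ∈ D₁) (hD₂ : ∀ t ∈ D₂, (1 - t) ∈ D₂)
    (hf₁_nonneg : ∀ t ∈ D₁, 0 ≤ f₁ t) (hf₂_nonneg : ∀ t ∈ D₂, 0 ≤ f₂ t)
    (hf₁ : ∀ t ∈ D₁, f₁ t + f₁ (1 - t) = 1) (hf₂ : ∀ t ∈ D₂, f₂ t + f₂ (1 - t) = 1)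
    (ξ₁ : ℝ) (hξ₁ : ξ₁ ∈ D₁) (ξ₂ : ℝ) (hξ₂ : ξ₂ ∈ D₂)
    (α β γ : ℂ) (hα : α ≠ 0) (hβ : β ≠ 0) (hγ : γ ≠ 0) :
    numRadius a ^ 6 ≤
      max 1 (‖α - 1‖ ^ 2) / (2 * ‖α‖ ^ 2) *
          ‖(star a * a) ^ 2 + (a * star a) ^ 2‖ * ‖a‖ ^ 2
        + f₁ (1 - ξ₁) * max 1 (‖β - 1‖ ^ 2) / ‖α * β‖ ^ 2 *
            ‖a ^ 2‖ ^ 2 * ‖a‖ ^ 2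
        + f₁ (1 - ξ₁) * f₂ (1 - ξ₂) / ‖α * β‖ ^ 2 * numRadius (a ^ 3) ^ 2
        + f₁ (1 - ξ₁) * (f₂ ξ₂ + 2 * max 1 (‖β - 1‖)) / ‖α * β‖ ^ 2 *
            ‖a ^ 2‖ * ‖a‖ * numRadius (a ^ 3)
        + (f₁ ξ₁ + 2 * max 1 (‖α - 1‖)) * max 1 (‖γ - 1‖) /
              (2 * ‖α‖ ^ 2 * ‖γ‖) *
            ‖star a * a + a * star a‖ * ‖a ^ 2‖ * ‖a‖ ^ 2
        + (f₁ ξ₁ + 2 * max 1 (‖α - 1‖)) /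
              (2 * ‖α‖ ^ 2 * ‖γ‖) *
            ‖star a * a + a * star a‖ * ‖a‖ * numRadius (a ^ 3) := by
  have f1nn : 0 ≤ f₁ ξ₁ := hf₁_nonneg ξ₁ hξ₁
  have f1nn' : 0 ≤ f₁ (1 - ξ₁) := hf₁_nonneg _ (hD₁ ξ₁ hξ₁)
  have f2nn : 0 ≤ f₂ ξ₂ := hf₂_nonneg ξ₂ hξ₂
  have f2nn' : 0 ≤ f₂ (1 - ξ₂) := hf₂_nonneg _ (hD₂ ξ₂ hξ₂)
  have hsum1 : f₁ ξ₁ + f₁ (1 - ξ₁) = 1 := hf₁ ξ₁ hξ₁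
  have hsum2 : f₂ ξ₂ + f₂ (1 - ξ₂) = 1 := hf₂ ξ₂ hξ₂
  have v3nn : 0 ≤ numRadius (a ^ 3) := numRadius_nonneg _
  -- nonnegativity of the right-hand side
  have m0α : (0:ℝ) ≤ max 1 (‖α - 1‖ ^ 2) := le_trans zero_le_one (le_max_left _ _)
  have m0β : (0:ℝ) ≤ max 1 (‖β - 1‖ ^ 2) := le_trans zero_le_one (le_max_left _ _)
  have m1α : (0:ℝ) ≤ max 1 (‖α - 1‖) := le_trans zero_le_one (le_max_left _ _)
  have m1β : (0:ℝ) ≤ max 1 (‖β - 1‖) := le_trans zero_le_one (le_max_left _ _)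
  have m1γ : (0:ℝ) ≤ max 1 (‖γ - 1‖) := le_trans zero_le_one (le_max_left _ _)
  have hC : 0 ≤ max 1 (‖α - 1‖ ^ 2) / (2 * ‖α‖ ^ 2) *
          ‖(star a * a) ^ 2 + (a * star a) ^ 2‖ * ‖a‖ ^ 2
        + f₁ (1 - ξ₁) * max 1 (‖β - 1‖ ^ 2) / ‖α * β‖ ^ 2 *
            ‖a ^ 2‖ ^ 2 * ‖a‖ ^ 2
        + f₁ (1 - ξ₁) * f₂ (1 - ξ₂) / ‖α * β‖ ^ 2 * numRadius (a ^ 3) ^ 2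
        + f₁ (1 - ξ₁) * (f₂ ξ₂ + 2 * max 1 (‖β - 1‖)) / ‖α * β‖ ^ 2 *
            ‖a ^ 2‖ * ‖a‖ * numRadius (a ^ 3)
        + (f₁ ξ₁ + 2 * max 1 (‖α - 1‖)) * max 1 (‖γ - 1‖) /
              (2 * ‖α‖ ^ 2 * ‖γ‖) *
            ‖star a * a + a * star a‖ * ‖a ^ 2‖ * ‖a‖ ^ 2
        + (f₁ ξ₁ + 2 * max 1 (‖α - 1‖)) /
              (2 * ‖α‖ ^ 2 * ‖γ‖) *
            ‖star a * a + a * star a‖ * ‖a‖ * numRadius (a ^ 3) := by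
    have d1 : (0:ℝ) ≤ 2 * ‖α‖ ^ 2 := by positivity
    have d2 : (0:ℝ) ≤ ‖α * β‖ ^ 2 := by positivity
    have d3 : (0:ℝ) ≤ 2 * ‖α‖ ^ 2 * ‖γ‖ := by positivity
    have t1 : (0:ℝ) ≤ max 1 (‖α - 1‖ ^ 2) / (2 * ‖α‖ ^ 2) *
        ‖(star a * a) ^ 2 + (a * star a) ^ 2‖ * ‖a‖ ^ 2 :=
      mul_nonneg (mul_nonneg (div_nonneg m0α d1) (norm_nonneg _)) (by positivity)
    have t2 : (0:ℝ) ≤ f₁ (1 - ξ₁) * max 1 (‖β - 1‖ ^ 2) / ‖α * β‖ ^ 2 *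
        ‖a ^ 2‖ ^ 2 * ‖a‖ ^ 2 :=
      mul_nonneg (mul_nonneg (div_nonneg (mul_nonneg f1nn' m0β) d2) (by positivity))
        (by positivity)
    have t3 : (0:ℝ) ≤ f₁ (1 - ξ₁) * f₂ (1 - ξ₂) / ‖α * β‖ ^ 2 *
        numRadius (a ^ 3) ^ 2 :=
      mul_nonneg (div_nonneg (mul_nonneg f1nn' f2nn') d2) (by positivity)
    have t4 : (0:ℝ) ≤ f₁ (1 - ξ₁) * (f₂ ξ₂ + 2 * max 1 (‖β - 1‖)) /
        ‖α * β‖ ^ 2 * ‖a ^ 2‖ * ‖a‖ * numRadius (a ^ 3) :=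
      mul_nonneg (mul_nonneg (mul_nonneg
        (div_nonneg (mul_nonneg f1nn' (by linarith)) d2) (norm_nonneg _)) (norm_nonneg _)) v3nn
    have t5 : (0:ℝ) ≤ (f₁ ξ₁ + 2 * max 1 (‖α - 1‖)) * max 1 (‖γ - 1‖) /
        (2 * ‖α‖ ^ 2 * ‖γ‖) *
        ‖star a * a + a * star a‖ * ‖a ^ 2‖ * ‖a‖ ^ 2 :=
      mul_nonneg (mul_nonneg (mul_nonneg
        (div_nonneg (mul_nonneg (by linarith) m1γ) d3) (norm_nonneg _)) (norm_nonneg _))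
        (by positivity)
    have t6 : (0:ℝ) ≤ (f₁ ξ₁ + 2 * max 1 (‖α - 1‖)) /
        (2 * ‖α‖ ^ 2 * ‖γ‖) *
        ‖star a * a + a * star a‖ * ‖a‖ * numRadius (a ^ 3) :=
      mul_nonneg (mul_nonneg (mul_nonneg
        (div_nonneg (by linarith) d3) (norm_nonneg _)) (norm_nonneg _)) v3nn
    linarith
  -- every element of the defining set satisfies the bound
  have key : ∀ r ∈ {r : ℝ | ∃ φ : A →ₗ[ℂ] ℂ, IsState φ ∧ r = ‖φ a‖},
      r ^ 6 ≤ max 1 (‖α - 1‖ ^ 2) / (2 * ‖α‖ ^ 2) *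
          ‖(star a * a) ^ 2 + (a * star a) ^ 2‖ * ‖a‖ ^ 2
        + f₁ (1 - ξ₁) * max 1 (‖β - 1‖ ^ 2) / ‖α * β‖ ^ 2 *
            ‖a ^ 2‖ ^ 2 * ‖a‖ ^ 2
        + f₁ (1 - ξ₁) * f₂ (1 - ξ₂) / ‖α * β‖ ^ 2 * numRadius (a ^ 3) ^ 2
        + f₁ (1 - ξ₁) * (f₂ ξ₂ + 2 * max 1 (‖β - 1‖)) / ‖α * β‖ ^ 2 *
            ‖a ^ 2‖ * ‖a‖ * numRadius (a ^ 3)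
        + (f₁ ξ₁ + 2 * max 1 (‖α - 1‖)) * max 1 (‖γ - 1‖) /
              (2 * ‖α‖ ^ 2 * ‖γ‖) *
            ‖star a * a + a * star a‖ * ‖a ^ 2‖ * ‖a‖ ^ 2
        + (f₁ ξ₁ + 2 * max 1 (‖α - 1‖)) /
              (2 * ‖α‖ ^ 2 * ‖γ‖) *
            ‖star a * a + a * star a‖ * ‖a‖ * numRadius (a ^ 3) := by
    rintro r ⟨φ, hφ, rfl⟩
    exact state_main hφ.1 hφ.2 a (f₁ ξ₁) (f₁ (1 - ξ₁)) (f₂ ξ₂) (f₂ (1 - ξ₂))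
      f1nn f1nn' f2nn f2nn' hsum1 hsum2 α β γ hα hβ hγ
      (numRadius (a ^ 3)) (abs_le_numRadius hφ (a ^ 3))
  -- pass to the supremum
  rcases Set.eq_empty_or_nonempty
      {r : ℝ | ∃ φ : A →ₗ[ℂ] ℂ, IsState φ ∧ r = ‖φ a‖} with hemp | hne
  · unfold numRadius
    rw [hemp, Real.sSup_empty]
    simpa [numRadius] using hC
  · set C := max 1 (‖α - 1‖ ^ 2) / (2 * ‖α‖ ^ 2) *
          ‖(star a * a) ^ 2 + (a * star a) ^ 2‖ * ‖a‖ ^ 2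
        + f₁ (1 - ξ₁) * max 1 (‖β - 1‖ ^ 2) / ‖α * β‖ ^ 2 *
            ‖a ^ 2‖ ^ 2 * ‖a‖ ^ 2
        + f₁ (1 - ξ₁) * f₂ (1 - ξ₂) / ‖α * β‖ ^ 2 * numRadius (a ^ 3) ^ 2
        + f₁ (1 - ξ₁) * (f₂ ξ₂ + 2 * max 1 (‖β - 1‖)) / ‖α * β‖ ^ 2 *
            ‖a ^ 2‖ * ‖a‖ * numRadius (a ^ 3)
        + (f₁ ξ₁ + 2 * max 1 (‖α - 1‖)) * max 1 (‖γ - 1‖) /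
              (2 * ‖α‖ ^ 2 * ‖γ‖) *
            ‖star a * a + a * star a‖ * ‖a ^ 2‖ * ‖a‖ ^ 2
        + (f₁ ξ₁ + 2 * max 1 (‖α - 1‖)) /
              (2 * ‖α‖ ^ 2 * ‖γ‖) *
            ‖star a * a + a * star a‖ * ‖a‖ * numRadius (a ^ 3) with hCdef
    set t : ℝ := C ^ ((6:ℕ) : ℝ)⁻¹ with ht
    have ht6 : t ^ (6:ℕ) = C := Real.rpow_inv_natCast_pow hC (by norm_num)
    have htnn : 0 ≤ t := Real.rpow_nonneg hC _
    have hsup : numRadius a ≤ t := by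
      apply csSup_le hne
      intro r hr
      have h6 := key r hr
      have hrnn : 0 ≤ r := by
        obtain ⟨φ, hφ, rfl⟩ := hr
        exact norm_nonneg _
      exact le_of_pow_le_pow_left₀ (by norm_num : (6:ℕ) ≠ 0) htnn (by rw [ht6]; exact h6)
    calc numRadius a ^ 6 ≤ t ^ 6 := pow_le_pow_left₀ (numRadius_nonneg a) hsup 6
      _ = C := ht6
end
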